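/- The matrix multiplication tensor is characterized by its symmetries: let n ≥ 1 and let T ∈ W be a tensor such that φ_{a,b,c}(T) = T for all invertible n×n complex matrices a, b, c. Then there exists λ ∈ ℂ with T = λ·Mₙ. -/

import Mathlib

set_option synthInstance.maxHeartbeats 1000000
set_option maxHeartbeats 1000000

open scoped TensorProduct
open Matrix

noncomputable section

abbrev MatN (n : ℕ) := Matrix (Fin n) (Fin n) ℂ
abbrev WN (n : ℕ) := MatN n ⊗[ℂ] (MatN n ⊗[ℂ] MatN n)

/-- the n×n matrix multiplication tensor -/
def MatMul (n : ℕ) : WN n :=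
  ∑ i : Fin n, ∑ j : Fin n, ∑ k : Fin n,
    single i j (1 : ℂ) ⊗ₜ[ℂ] (single j k (1 : ℂ) ⊗ₜ[ℂ] single k i (1 : ℂ))

namespace MMChar

abbrev Idx (n : ℕ) := (Fin n × Fin n) × (Fin n × Fin n) × (Fin n × Fin n)

def eB (n : ℕ) : Module.Basis (Fin n × Fin n) ℂ (MatN n) := Matrix.stdBasis ℂ (Fin n) (Fin n)

def BW (n : ℕ) : Module.Basis (Idx n) ℂ (WN n) := (eB n).tensorProduct ((eB n).tensorProduct (eB n))

lemma eB_repr {n : ℕ} (x : MatN n) (p : Fin n × Fin n) : (eB n).repr x p = x p.1 p.2 := by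
  simp [eB, Matrix.stdBasis, Module.Basis.map_repr]

lemma BW_repr_tmul {n : ℕ} (x y z : MatN n) (q : Idx n) :
    (BW n).repr (x ⊗ₜ[ℂ] (y ⊗ₜ[ℂ] z)) q =
      x q.1.1 q.1.2 * (y q.2.1.1 q.2.1.2 * z q.2.2.1 q.2.2.2) := by
  obtain ⟨q1, q2, q3⟩ := q
  simp [BW, Module.Basis.tensorProduct_repr_tmul_apply, eB_repr]
  ring

lemma BW_apply {n : ℕ} (p : Idx n) :
    BW n p = single p.1.1 p.1.2 (1:ℂ) ⊗ₜ[ℂ]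
      (single p.2.1.1 p.2.1.2 (1:ℂ) ⊗ₜ[ℂ] single p.2.2.1 p.2.2.2 (1:ℂ)) := by
  obtain ⟨⟨a,b⟩, ⟨c,d⟩, ⟨e,f⟩⟩ := p
  simp [BW, Module.Basis.tensorProduct_apply', eB, Matrix.stdBasis_eq_single]

def sw {n : ℕ} (a b : MatN n) : MatN n →ₗ[ℂ] MatN n :=
  (LinearMap.mulLeft ℂ a).comp (LinearMap.mulRight ℂ b)

lemma sw_apply {n : ℕ} (a b x : MatN n) : sw a b x = a * x * b := by
  simp [sw, LinearMap.mulLeft_apply, LinearMap.mulRight_apply, mul_assoc]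

def phi {n : ℕ} (a b c : MatN n) : WN n →ₗ[ℂ] WN n :=
  TensorProduct.map (sw a b⁻¹) (TensorProduct.map (sw b c⁻¹) (sw c a⁻¹))

lemma phi_tmul {n : ℕ} (a b c x y z : MatN n) :
    phi a b c (x ⊗ₜ[ℂ] (y ⊗ₜ[ℂ] z)) =
      (a * x * b⁻¹) ⊗ₜ[ℂ] ((b * y * c⁻¹) ⊗ₜ[ℂ] (c * z * a⁻¹)) := by
  simp [phi, sw_apply]


lemma diag_mul_diag_inv (d : Fin n → ℂ) (hd : ∀ i, d i ≠ 0) :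
    diagonal d * diagonal (fun i => (d i)⁻¹) = 1 := by
  rw [Matrix.diagonal_mul_diagonal]
  have : (fun i => d i * (d i)⁻¹) = fun _ => (1:ℂ) := funext fun i => mul_inv_cancel₀ (hd i)
  rw [this, Matrix.diagonal_one]

lemma isUnit_diag (d : Fin n → ℂ) (hd : ∀ i, d i ≠ 0) : IsUnit (diagonal d) := by
  refine ⟨⟨diagonal d, diagonal (fun i => (d i)⁻¹), diag_mul_diag_inv d hd, ?_⟩, rfl⟩
  rw [mul_eq_one_comm]
  exact diag_mul_diag_inv d hd

lemma inv_diag (d : Fin n → ℂ) (hd : ∀ i, d i ≠ 0) :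
    (diagonal d)⁻¹ = diagonal (fun i => (d i)⁻¹) :=
  Matrix.inv_eq_right_inv (diag_mul_diag_inv d hd)

lemma sandwich_entry (d e : Fin n → ℂ) (i j r s : Fin n) :
    (diagonal d * single i j (1:ℂ) * diagonal e) r s =
      if i = r ∧ j = s then d r * e s else 0 := by
  simp only [Matrix.mul_diagonal, Matrix.diagonal_mul, single, Matrix.of_apply,
    mul_ite, ite_mul, mul_one, mul_zero, zero_mul]

section Key
variable {n : ℕ} (T : WN n)
variable (hT : ∀ a b c : MatN n, IsUnit a → IsUnit b → IsUnit c →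
      ∀ φ : WN n →ₗ[ℂ] WN n,
        (∀ x y z : MatN n,
          φ (x ⊗ₜ[ℂ] (y ⊗ₜ[ℂ] z)) = (a * x * b⁻¹) ⊗ₜ[ℂ] ((b * y * c⁻¹) ⊗ₜ[ℂ] (c * z * a⁻¹))) →
        φ T = T)

include hT in
lemma key (a b c : MatN n) (ha : IsUnit a) (hb : IsUnit b) (hc : IsUnit c) (q : Idx n) :
    (BW n).repr T q =
      ∑ p : Idx n, (BW n).repr T p *
        ((a * single p.1.1 p.1.2 (1:ℂ) * b⁻¹) q.1.1 q.1.2 *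
         ((b * single p.2.1.1 p.2.1.2 (1:ℂ) * c⁻¹) q.2.1.1 q.2.1.2 *
          ((c * single p.2.2.1 p.2.2.2 (1:ℂ) * a⁻¹) q.2.2.1 q.2.2.2))) := by
  have h0 : phi a b c T = T := hT a b c ha hb hc _ (phi_tmul a b c)
  have h1 : phi a b c T = ∑ p : Idx n, (BW n).repr T p • phi a b c (BW n p) := by
    conv_lhs => rw [← Module.Basis.sum_repr (BW n) T]
    rw [map_sum]
    simp
  calc (BW n).repr T q = (BW n).repr (phi a b c T) q := by rw [h0]
    _ = ∑ p : Idx n, (BW n).repr T p * (BW n).repr (phi a b c (BW n p)) q := by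
        rw [h1]
        simp only [map_sum, _root_.map_smul, Finsupp.coe_finset_sum, Finset.sum_apply,
          Finsupp.smul_apply, smul_eq_mul]
    _ = _ := by
        refine Finset.sum_congr rfl fun p _ => ?_
        rw [BW_apply, phi_tmul, BW_repr_tmul]


include hT in
lemma keyDiag (d e f : Fin n → ℂ) (hd : ∀ i, d i ≠ 0) (he : ∀ i, e i ≠ 0)
    (hf : ∀ i, f i ≠ 0) (q : Idx n) :
    (BW n).repr T q =
      (BW n).repr T q *
        (d q.1.1 * (e q.1.2)⁻¹ *
          (e q.2.1.1 * (f q.2.1.2)⁻¹ * (f q.2.2.1 * (d q.2.2.2)⁻¹))) := by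
  have hkey := key T hT (diagonal d) (diagonal e) (diagonal f)
    (isUnit_diag d hd) (isUnit_diag e he) (isUnit_diag f hf) q
  rw [inv_diag d hd, inv_diag e he, inv_diag f hf] at hkey
  simp only [sandwich_entry] at hkey
  rw [Finset.sum_eq_single_of_mem q (Finset.mem_univ q)] at hkey
  · rw [if_pos ⟨rfl, rfl⟩, if_pos ⟨rfl, rfl⟩, if_pos ⟨rfl, rfl⟩] at hkey
    exact hkey.trans (by ring)
  · intro p _ hpq
    have hcases : ¬(p.1.1 = q.1.1 ∧ p.1.2 = q.1.2) ∨ ¬(p.2.1.1 = q.2.1.1 ∧ p.2.1.2 = q.2.1.2) ∨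
        ¬(p.2.2.1 = q.2.2.1 ∧ p.2.2.2 = q.2.2.2) := by
      by_contra hcon
      push_neg at hcon
      obtain ⟨⟨h1, h2⟩, ⟨h3, h4⟩, h5, h6⟩ :
          (p.1.1 = q.1.1 ∧ p.1.2 = q.1.2) ∧ (p.2.1.1 = q.2.1.1 ∧ p.2.1.2 = q.2.1.2) ∧
            (p.2.2.1 = q.2.2.1 ∧ p.2.2.2 = q.2.2.2) := by tauto
      exact hpq (Prod.ext (Prod.ext h1 h2) (Prod.ext (Prod.ext h3 h4) (Prod.ext h5 h6)))
    rcases hcases with h | h | h <;> simp [if_neg h]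

def dv (t : Fin n) : Fin n → ℂ := fun x => if x = t then 2 else 1

lemma dv_ne_zero (t : Fin n) : ∀ i, dv t i ≠ 0 := by
  intro i; unfold dv; split <;> norm_num

lemma dv_self (t : Fin n) : dv t t = 2 := by simp [dv]

lemma dv_of_ne {t x : Fin n} (h : x ≠ t) : dv t x = 1 := by simp [dv, h]

lemma one_ne_zero' : ∀ i : Fin n, (fun _ : Fin n => (1:ℂ)) i ≠ 0 := fun _ => one_ne_zero

include hT in
lemma step1 (q : Idx n) (h : ¬(q.2.2.2 = q.1.1 ∧ q.1.2 = q.2.1.1 ∧ q.2.1.2 = q.2.2.1)) :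
    (BW n).repr T q = 0 := by
  rw [not_and_or, not_and_or] at h
  rcases h with h | h | h
  · have hq := keyDiag T hT (dv q.1.1) (fun _ => 1) (fun _ => 1)
      (dv_ne_zero _) one_ne_zero' one_ne_zero' q
    rw [dv_self, dv_of_ne h] at hq
    norm_num at hq
    linear_combination (-1 : ℂ) * hq
  · have hq := keyDiag T hT (fun _ => 1) (dv q.2.1.1) (fun _ => 1)
      one_ne_zero' (dv_ne_zero _) one_ne_zero' q
    rw [dv_self, dv_of_ne h] at hq
    norm_num at hq
    linear_combination (-1 : ℂ) * hq
  · have hq := keyDiag T hT (fun _ => 1) (fun _ => 1) (dv q.2.2.1)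
      one_ne_zero' one_ne_zero' (dv_ne_zero _) q
    rw [dv_self, dv_of_ne h] at hq
    norm_num at hq
    linear_combination (-1 : ℂ) * hq


lemma E_entry (i j r s : Fin n) :
    single i j (1:ℂ) r s = if i = r ∧ j = s then 1 else 0 := rfl

lemma tv_mul_inv (u v : Fin n) (huv : u ≠ v) :
    (1 + single u v (1:ℂ)) * (1 - single u v 1) = 1 := by
  have h0 : single u v (1:ℂ) * single u v 1 = 0 :=
    single_mul_single_of_ne (1:ℂ) u v u (Ne.symm huv) 1
  rw [add_mul, one_mul, mul_sub, mul_one, h0, sub_zero]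
  abel

lemma tv_inv_mul (u v : Fin n) (huv : u ≠ v) :
    (1 - single u v (1:ℂ)) * (1 + single u v 1) = 1 := by
  have h0 : single u v (1:ℂ) * single u v 1 = 0 :=
    single_mul_single_of_ne (1:ℂ) u v u (Ne.symm huv) 1
  rw [sub_mul, one_mul, mul_add, mul_one, h0, add_zero]
  abel

lemma isUnit_tv (u v : Fin n) (huv : u ≠ v) : IsUnit (1 + single u v (1:ℂ)) :=
  ⟨⟨_, _, tv_mul_inv u v huv, tv_inv_mul u v huv⟩, rfl⟩

lemma inv_tv (u v : Fin n) (huv : u ≠ v) :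
    (1 + single u v (1:ℂ))⁻¹ = 1 - single u v 1 :=
  Matrix.inv_eq_right_inv (tv_mul_inv u v huv)

lemma tvL_entry (u v i j r s : Fin n) :
    (((1 + single u v (1:ℂ)) * single i j 1 : MatN n)) r s =
      (if i = r ∧ j = s then 1 else 0) + (if v = i ∧ (u = r ∧ j = s) then 1 else 0) := by
  rw [add_mul, one_mul, Matrix.add_apply]
  congr 1
  by_cases hv : v = i
  · subst hv
    rw [single_mul_single_same, one_mul]
    simp [E_entry]
  · rw [single_mul_single_of_ne (1:ℂ) u v i hv 1]
    simp [hv]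

lemma tvR_entry (u v i j r s : Fin n) :
    ((single i j (1:ℂ) * (1 - single u v 1) : MatN n)) r s =
      (if i = r ∧ j = s then 1 else 0) - (if j = u ∧ (i = r ∧ v = s) then 1 else 0) := by
  rw [mul_sub, mul_one, Matrix.sub_apply]
  congr 1
  by_cases hu : j = u
  · subst hu
    rw [single_mul_single_same, one_mul]
    simp [E_entry]
  · rw [single_mul_single_of_ne (1:ℂ) i j u hu 1]
    simp [hu]

include hT in
lemma step2a (u v j k : Fin n) (huv : u ≠ v) :
    (BW n).repr T ((u,j),(j,k),(k,u)) = (BW n).repr T ((v,j),(j,k),(k,v)) := by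
  have h0 : (BW n).repr T ((u,j),(j,k),(k,v)) = 0 :=
    step1 T hT _ (by simp [Ne.symm huv])
  have hkey := key T hT (1 + single u v 1) 1 1 (isUnit_tv u v huv)
    isUnit_one isUnit_one ((u,j),(j,k),(k,v))
  rw [h0, inv_tv u v huv, inv_one] at hkey
  simp only [Matrix.one_mul, Matrix.mul_one] at hkey
  simp only [tvL_entry, tvR_entry, E_entry] at hkey
  rw [Finset.sum_eq_add_of_mem (((u,j),(j,k),(k,u)) : Idx n) (((v,j),(j,k),(k,v)) : Idx n)
    (Finset.mem_univ _) (Finset.mem_univ _) (by simp [Prod.ext_iff, huv]) ?_] at hkey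
  · simp only [and_self, if_true, if_pos rfl] at hkey
    simp [huv, Ne.symm huv] at hkey
    linear_combination hkey
  · intro p _ hp
    obtain ⟨hpu, hpv⟩ := hp
    by_cases hpat : p.2.2.2 = p.1.1 ∧ p.1.2 = p.2.1.1 ∧ p.2.1.2 = p.2.2.1
    · obtain ⟨⟨a1,b1⟩,⟨b2,c1⟩,⟨c2,a2⟩⟩ := p
      obtain ⟨h1,h2,h3⟩ := hpat
      replace h1 : a2 = a1 := h1
      replace h2 : b1 = b2 := h2
      replace h3 : c1 = c2 := h3
      subst h1; subst h2; subst h3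
      by_cases hj : b1 = j
      · by_cases hk : c1 = k
        · subst hj; subst hk
          have hiu : a2 ≠ u := by rintro rfl; exact hpu rfl
          have hiv : a2 ≠ v := by rintro rfl; exact hpv rfl
          simp [hiu, Ne.symm hiv]
        · simp [hk]
      · simp [hj]
    · rw [step1 T hT _ hpat, zero_mul]


include hT in
lemma step2b (u v i k : Fin n) (huv : u ≠ v) :
    (BW n).repr T ((i,u),(u,k),(k,i)) = (BW n).repr T ((i,v),(v,k),(k,i)) := by
  have h0 : (BW n).repr T ((i,v),(u,k),(k,i)) = 0 :=
    step1 T hT _ (by simp [Ne.symm huv])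
  have hkey := key T hT 1 (1 + single u v 1) 1 isUnit_one
    (isUnit_tv u v huv) isUnit_one ((i,v),(u,k),(k,i))
  rw [h0, inv_tv u v huv, inv_one] at hkey
  simp only [Matrix.one_mul, Matrix.mul_one] at hkey
  simp only [tvL_entry, tvR_entry, E_entry] at hkey
  rw [Finset.sum_eq_add_of_mem (((i,u),(u,k),(k,i)) : Idx n) (((i,v),(v,k),(k,i)) : Idx n)
    (Finset.mem_univ _) (Finset.mem_univ _) (by simp [Prod.ext_iff, huv]) ?_] at hkey
  · simp [huv, Ne.symm huv] at hkey
    linear_combination hkey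
  · intro p _ hp
    obtain ⟨hpu, hpv⟩ := hp
    by_cases hpat : p.2.2.2 = p.1.1 ∧ p.1.2 = p.2.1.1 ∧ p.2.1.2 = p.2.2.1
    · obtain ⟨⟨a1,b1⟩,⟨b2,c1⟩,⟨c2,a2⟩⟩ := p
      obtain ⟨h1,h2,h3⟩ := hpat
      replace h1 : a2 = a1 := h1
      replace h2 : b1 = b2 := h2
      replace h3 : c1 = c2 := h3
      subst h1; subst h2; subst h3
      by_cases hk : c1 = k
      · by_cases hi : a2 = i
        · subst hk; subst hi
          have hju : b1 ≠ u := by rintro rfl; exact hpu rfl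
          have hjv : b1 ≠ v := by rintro rfl; exact hpv rfl
          simp [hju, hjv, Ne.symm hjv]
        · simp [hi]
      · simp [hk]
    · rw [step1 T hT _ hpat, zero_mul]

include hT in
lemma step2c (u v i j : Fin n) (huv : u ≠ v) :
    (BW n).repr T ((i,j),(j,u),(u,i)) = (BW n).repr T ((i,j),(j,v),(v,i)) := by
  have h0 : (BW n).repr T ((i,j),(j,v),(u,i)) = 0 :=
    step1 T hT _ (by simp [Ne.symm huv])
  have hkey := key T hT 1 1 (1 + single u v 1) isUnit_one
    isUnit_one (isUnit_tv u v huv) ((i,j),(j,v),(u,i))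
  rw [h0, inv_tv u v huv, inv_one] at hkey
  simp only [Matrix.one_mul, Matrix.mul_one] at hkey
  simp only [tvL_entry, tvR_entry, E_entry] at hkey
  rw [Finset.sum_eq_add_of_mem (((i,j),(j,u),(u,i)) : Idx n) (((i,j),(j,v),(v,i)) : Idx n)
    (Finset.mem_univ _) (Finset.mem_univ _) (by simp [Prod.ext_iff, huv]) ?_] at hkey
  · simp [huv, Ne.symm huv] at hkey
    linear_combination hkey
  · intro p _ hp
    obtain ⟨hpu, hpv⟩ := hp
    by_cases hpat : p.2.2.2 = p.1.1 ∧ p.1.2 = p.2.1.1 ∧ p.2.1.2 = p.2.2.1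
    · obtain ⟨⟨a1,b1⟩,⟨b2,c1⟩,⟨c2,a2⟩⟩ := p
      obtain ⟨h1,h2,h3⟩ := hpat
      replace h1 : a2 = a1 := h1
      replace h2 : b1 = b2 := h2
      replace h3 : c1 = c2 := h3
      subst h1; subst h2; subst h3
      by_cases hi : a2 = i
      · by_cases hj : b1 = j
        · subst hi; subst hj
          have hku : c1 ≠ u := by rintro rfl; exact hpu rfl
          have hkv : c1 ≠ v := by rintro rfl; exact hpv rfl
          simp [hku, hkv, Ne.symm hkv]
        · simp [hj]
      · simp [hi]
    · rw [step1 T hT _ hpat, zero_mul]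

end Key

lemma MatMul_repr {n : ℕ} (q : Idx n) :
    (BW n).repr (MatMul n) q =
      if q.2.2.2 = q.1.1 ∧ q.1.2 = q.2.1.1 ∧ q.2.1.2 = q.2.2.1 then 1 else 0 := by
  have hrepr : (BW n).repr (MatMul n) q = ∑ i : Fin n, ∑ j : Fin n, ∑ k : Fin n,
      (if i = q.1.1 ∧ j = q.1.2 then 1 else 0) *
        ((if j = q.2.1.1 ∧ k = q.2.1.2 then 1 else 0) *
          (if k = q.2.2.1 ∧ i = q.2.2.2 then (1:ℂ) else 0)) := by
    simp only [MatMul, map_sum, Finsupp.coe_finset_sum, Finset.sum_apply, BW_repr_tmul, E_entry]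
  rw [hrepr]
  by_cases hpat : q.2.2.2 = q.1.1 ∧ q.1.2 = q.2.1.1 ∧ q.2.1.2 = q.2.2.1
  · obtain ⟨h1, h2, h3⟩ := hpat
    rw [if_pos ⟨h1, h2, h3⟩]
    rw [Finset.sum_eq_single_of_mem q.1.1 (Finset.mem_univ _)]
    · rw [Finset.sum_eq_single_of_mem q.1.2 (Finset.mem_univ _)]
      · rw [Finset.sum_eq_single_of_mem q.2.1.2 (Finset.mem_univ _)]
        · simp [h1, h2, h3]
        · intro k _ hk
          simp [hk]
      · intro j _ hj
        simp [hj, fun h => hj (h2 ▸ h)]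
    · intro i _ hi
      simp [hi, fun h => hi (h1 ▸ h)]
  · rw [if_neg hpat]
    apply Finset.sum_eq_zero; intro i _
    apply Finset.sum_eq_zero; intro j _
    apply Finset.sum_eq_zero; intro k _
    by_cases h1 : i = q.1.1 ∧ j = q.1.2
    · by_cases h2 : j = q.2.1.1 ∧ k = q.2.1.2
      · by_cases h3 : k = q.2.2.1 ∧ i = q.2.2.2
        · exfalso
          exact hpat ⟨h3.2.symm.trans h1.1, h1.2.symm.trans h2.1, h2.2.symm.trans h3.1⟩
        · simp [h3]
      · simp [h2]
    · simp [h1]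

end MMChar

open MMChar

/-- The matrix multiplication tensor is characterized by its symmetries: any tensor
invariant under all product symmetries `φ_{a,b,c}` is a scalar multiple of `Mₙ`. -/
theorem matMul_characterized_by_symmetries (n : ℕ) (hn : 1 ≤ n) (T : WN n)
    (hT : ∀ a b c : MatN n, IsUnit a → IsUnit b → IsUnit c →
      ∀ φ : WN n →ₗ[ℂ] WN n,
        (∀ x y z : MatN n,
          φ (x ⊗ₜ[ℂ] (y ⊗ₜ[ℂ] z)) = (a * x * b⁻¹) ⊗ₜ[ℂ] ((b * y * c⁻¹) ⊗ₜ[ℂ] (c * z * a⁻¹))) →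
        φ T = T) :
    ∃ lam : ℂ, T = lam • MatMul n := by
  have z : Fin n := ⟨0, hn⟩
  have hconst : ∀ i j k : Fin n,
      (BW n).repr T ((i,j),(j,k),(k,i)) = (BW n).repr T ((z,z),(z,z),(z,z)) := by
    intro i j k
    have h1 : (BW n).repr T ((i,j),(j,k),(k,i)) = (BW n).repr T ((z,j),(j,k),(k,z)) := by
      by_cases h : i = z
      · subst h; rfl
      · exact step2a T hT i z j k h
    have h2 : (BW n).repr T ((z,j),(j,k),(k,z)) = (BW n).repr T ((z,z),(z,k),(k,z)) := by
      by_cases h : j = z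
      · subst h; rfl
      · exact step2b T hT j z z k h
    have h3 : (BW n).repr T ((z,z),(z,k),(k,z)) = (BW n).repr T ((z,z),(z,z),(z,z)) := by
      by_cases h : k = z
      · subst h; rfl
      · exact step2c T hT k z z z h
    exact h1.trans (h2.trans h3)
  refine ⟨(BW n).repr T ((z,z),(z,z),(z,z)), ?_⟩
  apply (BW n).repr.injective
  ext q
  rw [_root_.map_smul, Finsupp.smul_apply, MatMul_repr, smul_eq_mul]
  by_cases hpat : q.2.2.2 = q.1.1 ∧ q.1.2 = q.2.1.1 ∧ q.2.1.2 = q.2.2.1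
  · rw [if_pos hpat, mul_one]
    obtain ⟨⟨a1,b1⟩,⟨b2,c1⟩,⟨c2,a2⟩⟩ := q
    obtain ⟨h1,h2,h3⟩ := hpat
    replace h1 : a2 = a1 := h1
    replace h2 : b1 = b2 := h2
    replace h3 : c1 = c2 := h3
    subst h1; subst h2; subst h3
    exact hconst a2 b1 c1
  · rw [if_neg hpat, mul_zero]
    exact step1 T hT q hpat
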